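/- Let W : ℝ → [0,∞) be a continuous potential satisfying hypotheses (w2)–(w4) and let q* > 0 be the constant of the one-dimensional interpolation inequality. Then for every q ≤ q*/4, every bounded open interval I, every 0 < ε ≤ ℒ¹(I), and every C² function u on the closure of I, q ε² ∫_I (u')² dx ≤ ∫_I ( W(u) + ε⁴ (u'')² ) dx. -/

import Mathlib

open MeasureTheory Real

/-- Hypotheses (w2)–(w4) for a continuous nonnegative potential. -/
def WCont (W : ℝ → ℝ) : Prop :=
  Continuous W ∧ (∀ s, 0 ≤ W s) ∧ (∀ s, 0 ≤ s → s ≠ 1 → 0 < W s) ∧ W 1 = 0 ∧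
  ∃ cW : ℝ, 0 < cW ∧ cW ≤ 1 ∧ ∀ s, 0 ≤ s → cW * |s - 1|^2 ≤ W s

theorem stmt4 (W : ℝ → ℝ) (hW : WCont W) (qs : ℝ) (hqs : 0 < qs)
    -- qs is the constant of the one-dimensional interpolation inequality
    (hinterp : ∀ a b : ℝ, a < b → ∀ u : ℝ → ℝ, ContDiff ℝ 2 u →
      qs * ∫ x in a..b, (deriv u x)^2 ≤
        (1 / (b - a)^2) * (∫ x in a..b, W (u x)) +
          (b - a)^2 * ∫ x in a..b, (deriv (deriv u) x)^2) :
    ∀ q : ℝ, q ≤ qs / 4 → ∀ a b : ℝ, a < b → ∀ ε : ℝ, 0 < ε → ε ≤ b - a →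
    ∀ u : ℝ → ℝ, ContDiff ℝ 2 u →
      q * ε^2 * ∫ x in a..b, (deriv u x)^2 ≤
        ∫ x in a..b, (W (u x) + ε^4 * (deriv (deriv u) x)^2) := by
  intro q hq a b hab ε hε hεb u hu
  have hWc : Continuous W := hW.1
  have hW0 : ∀ s, 0 ≤ W s := hW.2.1
  have hd1 : Continuous (deriv u) := hu.continuous_deriv one_le_two
  have hd2 : Continuous (deriv (deriv u)) := by
    have h2 := hu
    rw [show (2 : WithTop ℕ∞) = 1 + 1 by norm_num] at h2
    exact ((contDiff_succ_iff_deriv.mp h2).2.2.continuous_deriv le_rfl)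
  have hg1 : Continuous fun x => (deriv u x)^2 := hd1.pow 2
  have hgW : Continuous fun x => W (u x) := hWc.comp hu.continuous
  have hg2 : Continuous fun x => (deriv (deriv u) x)^2 := hd2.pow 2
  set N : ℕ := ⌈(b - a) / ε⌉₊ with hNdef
  have hx1 : (1 : ℝ) ≤ (b - a) / ε := (one_le_div hε).mpr hεb
  have hN0 : 0 < N := Nat.ceil_pos.mpr (by linarith)
  have hNR : (0 : ℝ) < (N : ℝ) := by exact_mod_cast hN0
  set L : ℝ := (b - a) / N with hLdef
  have hL : 0 < L := div_pos (by linarith) hNR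
  have hba : (b - a) / ε ≤ (N : ℝ) := Nat.le_ceil _
  have hLε : L ≤ ε := by
    rw [hLdef, div_le_iff₀ hNR]
    calc b - a = ((b - a) / ε) * ε := by field_simp
    _ ≤ (N : ℝ) * ε := by nlinarith
    _ = ε * N := by ring
  have hεL : ε ≤ 2 * L := by
    have hceil : (N : ℝ) < (b - a) / ε + 1 := Nat.ceil_lt_add_one (by linarith)
    have h3 : ε * (N : ℝ) < (b - a) + ε := by
      have := mul_lt_mul_of_pos_left hceil hε
      have heq : ε * ((b - a) / ε + 1) = (b - a) + ε := by field_simp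
      linarith
    rw [hLdef, show 2 * ((b - a) / (N : ℝ)) = 2 * (b - a) / (N : ℝ) by ring,
      le_div_iff₀ hNR]
    linarith
  set f : ℕ → ℝ := fun i => a + i * L with hfdef
  have hf0 : f 0 = a := by simp [hfdef]
  have hfN : f N = b := by
    simp only [hfdef, hLdef]
    field_simp
    ring
  have hfstep : ∀ i : ℕ, f (i + 1) = f i + L := by
    intro i; simp only [hfdef]; push_cast; ring
  -- key single-interval estimate
  have key : ∀ c : ℝ,
      qs / 4 * ε^2 * ∫ x in c..(c+L), (deriv u x)^2 ≤
        (∫ x in c..(c+L), W (u x)) + ε^4 * ∫ x in c..(c+L), (deriv (deriv u) x)^2 := by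
    intro c
    have h := hinterp c (c + L) (by linarith) u hu
    have hsub : c + L - c = L := by ring
    rw [hsub] at h
    set I1 := ∫ x in c..(c+L), (deriv u x)^2
    set IW := ∫ x in c..(c+L), W (u x)
    set I2 := ∫ x in c..(c+L), (deriv (deriv u) x)^2
    have hIW : 0 ≤ IW :=
      intervalIntegral.integral_nonneg (by linarith) (fun x _ => hW0 _)
    have hI2 : 0 ≤ I2 :=
      intervalIntegral.integral_nonneg (by linarith) (fun x _ => sq_nonneg _)
    have hmul := mul_le_mul_of_nonneg_left h (by positivity : (0:ℝ) ≤ ε^2 / 4)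
    have h1 : ε^2 / 4 * (1 / L^2) ≤ 1 := by
      rw [div_mul_div_comm, div_le_one (by positivity)]
      nlinarith
    have h2 : ε^2 / 4 * L^2 ≤ ε^4 := by
      have hsq : L^2 ≤ ε^2 := by nlinarith
      nlinarith [mul_le_mul_of_nonneg_left hsq (sq_nonneg ε)]
    calc qs / 4 * ε^2 * I1 = ε^2 / 4 * (qs * I1) := by ring
      _ ≤ ε^2 / 4 * (1 / L^2 * IW + L^2 * I2) := hmul
      _ = (ε^2 / 4 * (1 / L^2)) * IW + (ε^2 / 4 * L^2) * I2 := by ring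
      _ ≤ 1 * IW + ε^4 * I2 :=
          add_le_add (mul_le_mul_of_nonneg_right h1 hIW)
            (mul_le_mul_of_nonneg_right h2 hI2)
      _ = IW + ε^4 * I2 := by ring
  -- sum the integrals over adjacent subintervals
  have hsum1 : ∑ i ∈ Finset.range N, (∫ x in f i..f (i+1), (deriv u x)^2)
      = ∫ x in a..b, (deriv u x)^2 := by
    rw [intervalIntegral.sum_integral_adjacent_intervals
      (fun k _ => hg1.intervalIntegrable _ _), hf0, hfN]
  have hsumW : ∑ i ∈ Finset.range N, (∫ x in f i..f (i+1), W (u x))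
      = ∫ x in a..b, W (u x) := by
    rw [intervalIntegral.sum_integral_adjacent_intervals
      (fun k _ => hgW.intervalIntegrable _ _), hf0, hfN]
  have hsum2 : ∑ i ∈ Finset.range N, (∫ x in f i..f (i+1), (deriv (deriv u) x)^2)
      = ∫ x in a..b, (deriv (deriv u) x)^2 := by
    rw [intervalIntegral.sum_integral_adjacent_intervals
      (fun k _ => hg2.intervalIntegrable _ _), hf0, hfN]
  have total : qs / 4 * ε^2 * ∫ x in a..b, (deriv u x)^2 ≤
      (∫ x in a..b, W (u x)) + ε^4 * ∫ x in a..b, (deriv (deriv u) x)^2 := by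
    rw [← hsum1, ← hsumW, ← hsum2, Finset.mul_sum, Finset.mul_sum,
      ← Finset.sum_add_distrib]
    apply Finset.sum_le_sum
    intro i _
    rw [hfstep i]
    exact key (f i)
  have hI1 : 0 ≤ ∫ x in a..b, (deriv u x)^2 :=
    intervalIntegral.integral_nonneg (le_of_lt hab) (fun x _ => sq_nonneg _)
  have hrhs : ∫ x in a..b, (W (u x) + ε^4 * (deriv (deriv u) x)^2)
      = (∫ x in a..b, W (u x)) + ε^4 * ∫ x in a..b, (deriv (deriv u) x)^2 := by
    rw [intervalIntegral.integral_add (g := fun x => ε^4 * (deriv (deriv u) x)^2) (hgW.intervalIntegrable _ _)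
      ((continuous_const.mul hg2).intervalIntegrable _ _),
      intervalIntegral.integral_const_mul]
  rw [hrhs]
  have : q * ε^2 * ∫ x in a..b, (deriv u x)^2 ≤
      qs / 4 * ε^2 * ∫ x in a..b, (deriv u x)^2 := by
    have := mul_le_mul_of_nonneg_right hq (mul_nonneg (sq_nonneg ε) hI1)
    nlinarith
  linarith
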